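/- Let n ≥ 2, γ > 0, τ₀ > 0, and for each α ∈ {2,…,n} let λ_α > γ/4, Ω_α = √(4λ_α γ − γ²), g_α(t) = (2γ/Ω_α) e^{−γt/2} sin(Ω_α t / 2), and σ_{αβ} ∈ ℝ for α, β ∈ {2,…,n}. Define R_{αβ}(t,t′) = σ_{αβ} ∫₀ᵗ ∫₀^{t′} ġ_α(t−s) ġ_β(t′−s′) e^{−|s−s′|/τ₀} ds′ ds. Then there exists C > 0 such that for all T ≥ 1, T⁻² Σ_{α,β=2}^{n} ∫₀ᵀ ∫₀ᵀ 2 R_{αβ}(t,t′)² dt dt′ ≤ C / T. -/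

import Mathlib

open MeasureTheory intervalIntegral

/-- Integral of an exponential `exp (c*x + e)`. -/
lemma exp_affine_integral (c e a b : ℝ) (hc : c ≠ 0) :
    ∫ x in a..b, Real.exp (c * x + e)
      = c⁻¹ * (Real.exp (c * b + e) - Real.exp (c * a + e)) := by
  have h : ∀ x : ℝ, HasDerivAt (fun y => c⁻¹ * Real.exp (c * y + e))
      (Real.exp (c * x + e)) x := by
    intro x
    have h1 : HasDerivAt (fun y : ℝ => c * y + e) c x :=
      by simpa using ((hasDerivAt_id x).const_mul c).add_const e
    have h2 := (Real.hasDerivAt_exp (c * x + e)).comp x h1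
    have h3 := h2.const_mul c⁻¹
    have : c⁻¹ * (Real.exp (c * x + e) * c) = Real.exp (c * x + e) := by
      field_simp
    simpa [this] using h3
  rw [intervalIntegral.integral_eq_sub_of_hasDerivAt (fun x _ => h x)
    ((Real.continuous_exp.comp (by continuity)).intervalIntegrable a b)]
  ring

/-- `∫ x in a..b, exp (-(c*(b-x)))` is at most `c⁻¹` when `a ≤ b`, `0 < c`. -/
lemma exp_decay_left {c : ℝ} (hc : 0 < c) {a b : ℝ} (hab : a ≤ b) :
    ∫ x in a..b, Real.exp (-(c * (b - x))) ≤ c⁻¹ := by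
  have hcongr : (fun x : ℝ => Real.exp (-(c * (b - x))))
      = fun x => Real.exp (c * x + (-(c * b))) := by
    funext x; ring_nf
  rw [hcongr, exp_affine_integral c (-(c*b)) a b hc.ne']
  have h1 : Real.exp (c * b + -(c * b)) = 1 := by simp
  rw [h1]
  have h2 : (0:ℝ) < Real.exp (c * a + -(c * b)) := Real.exp_pos _
  have : 1 - Real.exp (c * a + -(c * b)) ≤ 1 := by linarith
  calc c⁻¹ * (1 - Real.exp (c * a + -(c * b))) ≤ c⁻¹ * 1 := by
        apply mul_le_mul_of_nonneg_left this (by positivity)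
    _ = c⁻¹ := mul_one _

/-- `∫ x in a..b, exp (-(c*(x-a)))` is at most `c⁻¹` when `a ≤ b`, `0 < c`. -/
lemma exp_decay_right {c : ℝ} (hc : 0 < c) {a b : ℝ} (hab : a ≤ b) :
    ∫ x in a..b, Real.exp (-(c * (x - a))) ≤ c⁻¹ := by
  have hcongr : (fun x : ℝ => Real.exp (-(c * (x - a))))
      = fun x => Real.exp (-c * x + (c * a)) := by
    funext x; ring_nf
  rw [hcongr, exp_affine_integral (-c) (c*a) a b (by linarith)]
  have h1 : Real.exp (-c * a + c * a) = 1 := by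
    rw [show -c * a + c * a = 0 by ring, Real.exp_zero]
  rw [h1]
  have h2 : (0:ℝ) < Real.exp (-c * b + c * a) := Real.exp_pos _
  have key : (-c)⁻¹ * (Real.exp (-c * b + c * a) - 1)
      = c⁻¹ * (1 - Real.exp (-c * b + c * a)) := by
    rw [inv_neg]; ring
  rw [key]
  have : 1 - Real.exp (-c * b + c * a) ≤ 1 := by linarith
  calc c⁻¹ * (1 - Real.exp (-c * b + c * a)) ≤ c⁻¹ * 1 :=
        mul_le_mul_of_nonneg_left this (by positivity)
    _ = c⁻¹ := mul_one _


lemma green_hasDerivAt (γ ω c : ℝ) (t : ℝ) :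
    HasDerivAt (fun t : ℝ => c * Real.exp (-γ * t / 2) * Real.sin (ω * t / 2))
      (c * (Real.exp (-γ * t / 2) * (-γ / 2) * Real.sin (ω * t / 2)
        + Real.exp (-γ * t / 2) * (Real.cos (ω * t / 2) * (ω / 2)))) t := by
  have h1 : HasDerivAt (fun t : ℝ => -γ * t / 2) (-γ / 2) t := by
    simpa using ((hasDerivAt_id t).const_mul (-γ)).div_const 2
  have hE : HasDerivAt (fun t : ℝ => Real.exp (-γ * t / 2))
      (Real.exp (-γ * t / 2) * (-γ / 2)) t :=
    (Real.hasDerivAt_exp _).comp t h1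
  have h2 : HasDerivAt (fun t : ℝ => ω * t / 2) (ω / 2) t := by
    simpa using ((hasDerivAt_id t).const_mul ω).div_const 2
  have hS : HasDerivAt (fun t : ℝ => Real.sin (ω * t / 2))
      (Real.cos (ω * t / 2) * (ω / 2)) t :=
    (Real.hasDerivAt_sin _).comp t h2
  have := (hE.mul hS).const_mul c
  have harr : (fun t : ℝ => c * (Real.exp (-γ * t / 2) * Real.sin (ω * t / 2)))
      = fun t : ℝ => c * Real.exp (-γ * t / 2) * Real.sin (ω * t / 2) := by
    funext t; ring
  simp only [Pi.mul_apply] at this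
  rw [harr] at this
  exact this

lemma green_package (γ ω c : ℝ) :
    Continuous (deriv (fun t : ℝ => c * Real.exp (-γ * t / 2) * Real.sin (ω * t / 2)))
    ∧ ∀ u : ℝ, |deriv (fun t : ℝ => c * Real.exp (-γ * t / 2) * Real.sin (ω * t / 2)) u|
        ≤ |c| * (|γ| / 2 + |ω| / 2) * Real.exp (-γ * u / 2) := by
  have hderiv : deriv (fun t : ℝ => c * Real.exp (-γ * t / 2) * Real.sin (ω * t / 2))
      = fun u : ℝ => c * (Real.exp (-γ * u / 2) * (-γ / 2) * Real.sin (ω * u / 2)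
        + Real.exp (-γ * u / 2) * (Real.cos (ω * u / 2) * (ω / 2))) :=
    funext fun u => (green_hasDerivAt γ ω c u).deriv
  rw [hderiv]
  constructor
  · fun_prop
  · intro u
    set E := Real.exp (-γ * u / 2) with hEdef
    have hE : 0 < E := Real.exp_pos _
    have hs : |Real.sin (ω * u / 2)| ≤ 1 := Real.abs_sin_le_one _
    have hc : |Real.cos (ω * u / 2)| ≤ 1 := Real.abs_cos_le_one _
    rw [abs_mul]
    have h1 : |E * (-γ / 2) * Real.sin (ω * u / 2)| ≤ E * (|γ| / 2) := by
      rw [abs_mul, abs_mul, abs_of_pos hE]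
      have : |(-γ / 2)| = |γ| / 2 := by rw [abs_div, abs_neg]; norm_num
      rw [this]
      calc E * (|γ| / 2) * |Real.sin (ω * u / 2)| ≤ E * (|γ| / 2) * 1 := by
            apply mul_le_mul_of_nonneg_left hs (by positivity)
        _ = E * (|γ| / 2) := mul_one _
    have h2 : |E * (Real.cos (ω * u / 2) * (ω / 2))| ≤ E * (|ω| / 2) := by
      rw [abs_mul, abs_mul, abs_of_pos hE]
      have : |(ω / 2)| = |ω| / 2 := by rw [abs_div]; norm_num
      rw [this]
      calc E * (|Real.cos (ω * u / 2)| * (|ω| / 2)) ≤ E * (1 * (|ω| / 2)) := by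
            apply mul_le_mul_of_nonneg_left
              (mul_le_mul_of_nonneg_right hc (by positivity)) hE.le
        _ = E * (|ω| / 2) := by ring
    calc |c| * |E * (-γ / 2) * Real.sin (ω * u / 2)
          + E * (Real.cos (ω * u / 2) * (ω / 2))|
        ≤ |c| * (|E * (-γ / 2) * Real.sin (ω * u / 2)|
          + |E * (Real.cos (ω * u / 2) * (ω / 2))|) :=
          mul_le_mul_of_nonneg_left (abs_add_le _ _) (abs_nonneg c)
      _ ≤ |c| * (E * (|γ| / 2) + E * (|ω| / 2)) :=
          mul_le_mul_of_nonneg_left (add_le_add h1 h2) (abs_nonneg c)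
      _ = |c| * (|γ| / 2 + |ω| / 2) * E := by ring


lemma kernel_double_bound (γ τ₀ : ℝ) (hγ : 0 < γ) (hτ₀ : 0 < τ₀)
    (Gα Gβ : ℝ → ℝ) (Mα Mβ : ℝ) (hMα : 0 ≤ Mα) (hMβ : 0 ≤ Mβ)
    (hGα : ∀ u, |Gα u| ≤ Mα * Real.exp (-γ * u / 2))
    (hGβ : ∀ u, |Gβ u| ≤ Mβ * Real.exp (-γ * u / 2))
    (t t' : ℝ) (ht : 0 ≤ t) (ht' : 0 ≤ t') :
    |∫ s in (0:ℝ)..t, ∫ s' in (0:ℝ)..t',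
        Gα (t - s) * Gβ (t' - s') * Real.exp (-|s - s'| / τ₀)|
      ≤ Mα * Mβ * (min (γ / 2) (1 / τ₀) / 2)⁻¹ ^ 2
          * Real.exp (-(min (γ / 2) (1 / τ₀) / 2 * |t - t'|)) := by
  set c : ℝ := min (γ / 2) (1 / τ₀) with hcdef
  have hc : 0 < c := lt_min (by linarith) (by positivity)
  set d : ℝ := c / 2 with hddef
  have hd : 0 < d := by positivity
  have hd1 : 2 * d ≤ γ / 2 := by
    have := min_le_left (γ / 2) (1 / τ₀); rw [hddef]; linarith
  have hd2 : 2 * d ≤ 1 / τ₀ := by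
    have := min_le_right (γ / 2) (1 / τ₀); rw [hddef]; linarith
  -- pointwise bound
  have hpt : ∀ s s' : ℝ, 0 ≤ s → s ≤ t → 0 ≤ s' → s' ≤ t' →
      |Gα (t - s) * Gβ (t' - s') * Real.exp (-|s - s'| / τ₀)|
        ≤ Mα * Mβ * Real.exp (-(d * |t - t'|)) * Real.exp (-(d * (t - s)))
            * Real.exp (-(d * (t' - s'))) := by
    intro s s' hs hst hs' hst'
    rw [show -|s - s'| / τ₀ = -(τ₀⁻¹ * |s - s'|) by ring]
    have hA : (0:ℝ) ≤ t - s := by linarith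
    have hB : (0:ℝ) ≤ t' - s' := by linarith
    have hD : (0:ℝ) ≤ |s - s'| := abs_nonneg _
    have e1 := hGα (t - s)
    have e2 := hGβ (t' - s')
    calc |Gα (t - s) * Gβ (t' - s') * Real.exp (-(τ₀⁻¹ * |s - s'|))|
        = |Gα (t - s)| * |Gβ (t' - s')| * Real.exp (-(τ₀⁻¹ * |s - s'|)) := by
          rw [abs_mul, abs_mul, Real.abs_exp]
      _ ≤ (Mα * Real.exp (-γ * (t - s) / 2)) * (Mβ * Real.exp (-γ * (t' - s') / 2))
            * Real.exp (-(τ₀⁻¹ * |s - s'|)) := by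
          apply mul_le_mul_of_nonneg_right _ (Real.exp_pos _).le
          exact mul_le_mul e1 e2 (abs_nonneg _) (by positivity)
      _ = Mα * Mβ * (Real.exp (-γ * (t - s) / 2) * Real.exp (-γ * (t' - s') / 2)
            * Real.exp (-(τ₀⁻¹ * |s - s'|))) := by ring
      _ ≤ Mα * Mβ * (Real.exp (-(d * |t - t'|)) * Real.exp (-(d * (t - s)))
            * Real.exp (-(d * (t' - s')))) := by
          apply mul_le_mul_of_nonneg_left _ (by positivity)
          rw [← Real.exp_add, ← Real.exp_add, ← Real.exp_add, ← Real.exp_add]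
          apply Real.exp_le_exp.mpr
          have h4 : |t - t'| ≤ (t - s) + (t' - s') + |s - s'| := by
            rcases abs_cases (t - t') with ⟨h, _⟩ | ⟨h, _⟩ <;>
              rcases abs_cases (s - s') with ⟨h', _⟩ | ⟨h', _⟩ <;> linarith
          have k1 : d * |t - t'| ≤ d * ((t - s) + (t' - s') + |s - s'|) :=
            mul_le_mul_of_nonneg_left h4 hd.le
          have k2 : (2 * d) * (t - s) ≤ (γ / 2) * (t - s) :=
            mul_le_mul_of_nonneg_right hd1 hA
          have k3 : (2 * d) * (t' - s') ≤ (γ / 2) * (t' - s') :=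
            mul_le_mul_of_nonneg_right hd1 hB
          have k4 : (2 * d) * |s - s'| ≤ τ₀⁻¹ * |s - s'| := by
            have h2' : 2 * d ≤ τ₀⁻¹ := by rw [← one_div]; exact hd2
            exact mul_le_mul_of_nonneg_right h2' hD
          have k5 : 0 ≤ d * |s - s'| := mul_nonneg hd.le hD
          have k6 : 0 ≤ d * (t - s) := mul_nonneg hd.le hA
          have k7 : 0 ≤ d * (t' - s') := mul_nonneg hd.le hB
          linarith [k1, k2, k3, k4, k5, k6, k7]
      _ = Mα * Mβ * Real.exp (-(d * |t - t'|)) * Real.exp (-(d * (t - s)))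
            * Real.exp (-(d * (t' - s'))) := by ring
  -- inner integral bound
  have hinner : ∀ s : ℝ, 0 ≤ s → s ≤ t →
      ‖∫ s' in (0:ℝ)..t', Gα (t - s) * Gβ (t' - s') * Real.exp (-|s - s'| / τ₀)‖
        ≤ Mα * Mβ * Real.exp (-(d * |t - t'|)) * d⁻¹ * Real.exp (-(d * (t - s))) := by
    intro s hs hst
    set K : ℝ := Mα * Mβ * Real.exp (-(d * |t - t'|)) * Real.exp (-(d * (t - s))) with hKdef
    have hK : 0 ≤ K := by positivity
    have hb : IntervalIntegrable (fun s' : ℝ => K * Real.exp (-(d * (t' - s'))))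
        volume 0 t' := by
      apply Continuous.intervalIntegrable; fun_prop
    have hae : ∀ᵐ s' ∂(volume.restrict (Set.uIoc (0:ℝ) t')),
        ‖Gα (t - s) * Gβ (t' - s') * Real.exp (-|s - s'| / τ₀)‖
          ≤ K * Real.exp (-(d * (t' - s'))) := by
      apply ae_restrict_of_forall_mem measurableSet_uIoc
      intro s' hs'
      rw [Set.uIoc_of_le ht'] at hs'
      rw [Real.norm_eq_abs]
      calc |Gα (t - s) * Gβ (t' - s') * Real.exp (-|s - s'| / τ₀)|
          ≤ Mα * Mβ * Real.exp (-(d * |t - t'|)) * Real.exp (-(d * (t - s)))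
              * Real.exp (-(d * (t' - s'))) := hpt s s' hs hst hs'.1.le hs'.2
        _ = K * Real.exp (-(d * (t' - s'))) := by rw [hKdef]
    have hle := intervalIntegral.norm_integral_le_abs_of_norm_le hae hb
    have hval : ∫ s' in (0:ℝ)..t', K * Real.exp (-(d * (t' - s')))
        = K * ∫ s' in (0:ℝ)..t', Real.exp (-(d * (t' - s'))) :=
      intervalIntegral.integral_const_mul _ _
    have hX1 : (0:ℝ) ≤ ∫ s' in (0:ℝ)..t', Real.exp (-(d * (t' - s'))) :=
      intervalIntegral.integral_nonneg ht' (fun u _ => (Real.exp_pos _).le)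
    have hX2 : ∫ s' in (0:ℝ)..t', Real.exp (-(d * (t' - s'))) ≤ d⁻¹ :=
      exp_decay_left hd ht'
    calc ‖∫ s' in (0:ℝ)..t', Gα (t - s) * Gβ (t' - s') * Real.exp (-|s - s'| / τ₀)‖
        ≤ |∫ s' in (0:ℝ)..t', K * Real.exp (-(d * (t' - s')))| := hle
      _ = K * ∫ s' in (0:ℝ)..t', Real.exp (-(d * (t' - s'))) := by
          rw [hval, abs_of_nonneg (mul_nonneg hK hX1)]
      _ ≤ K * d⁻¹ := mul_le_mul_of_nonneg_left hX2 hK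
      _ = Mα * Mβ * Real.exp (-(d * |t - t'|)) * d⁻¹ * Real.exp (-(d * (t - s))) := by
          rw [hKdef]; ring
  -- outer integral bound
  set K2 : ℝ := Mα * Mβ * Real.exp (-(d * |t - t'|)) * d⁻¹ with hK2def
  have hK2 : 0 ≤ K2 := by positivity
  have hb2 : IntervalIntegrable (fun s : ℝ => K2 * Real.exp (-(d * (t - s))))
      volume 0 t := by
    apply Continuous.intervalIntegrable; fun_prop
  have hae2 : ∀ᵐ s ∂(volume.restrict (Set.uIoc (0:ℝ) t)),
      ‖∫ s' in (0:ℝ)..t', Gα (t - s) * Gβ (t' - s') * Real.exp (-|s - s'| / τ₀)‖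
        ≤ K2 * Real.exp (-(d * (t - s))) := by
    apply ae_restrict_of_forall_mem measurableSet_uIoc
    intro s hs
    rw [Set.uIoc_of_le ht] at hs
    exact hinner s hs.1.le hs.2
  have hle2 := intervalIntegral.norm_integral_le_abs_of_norm_le hae2 hb2
  have hval2 : ∫ s in (0:ℝ)..t, K2 * Real.exp (-(d * (t - s)))
      = K2 * ∫ s in (0:ℝ)..t, Real.exp (-(d * (t - s))) :=
    intervalIntegral.integral_const_mul _ _
  have hY1 : (0:ℝ) ≤ ∫ s in (0:ℝ)..t, Real.exp (-(d * (t - s))) :=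
    intervalIntegral.integral_nonneg ht (fun u _ => (Real.exp_pos _).le)
  have hY2 : ∫ s in (0:ℝ)..t, Real.exp (-(d * (t - s))) ≤ d⁻¹ := exp_decay_left hd ht
  calc |∫ s in (0:ℝ)..t, ∫ s' in (0:ℝ)..t',
        Gα (t - s) * Gβ (t' - s') * Real.exp (-|s - s'| / τ₀)|
      ≤ |∫ s in (0:ℝ)..t, K2 * Real.exp (-(d * (t - s)))| := by
        rw [← Real.norm_eq_abs]; exact hle2
    _ = K2 * ∫ s in (0:ℝ)..t, Real.exp (-(d * (t - s))) := by
        rw [hval2, abs_of_nonneg (mul_nonneg hK2 hY1)]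
    _ ≤ K2 * d⁻¹ := mul_le_mul_of_nonneg_left hY2 hK2
    _ = Mα * Mβ * d⁻¹ ^ 2 * Real.exp (-(d * |t - t'|)) := by rw [hK2def]; ring

/-- deterministic content of Proposition 3: `var[𝒫(T)] = O(1/T)`.
For underdamped modes `α ∈ {2,…,n}` (`λ_α > γ/4`) with Green's functions `g_α`
and cross-covariance kernels
`R_{αβ}(t,t′) = σ_{αβ} ∫₀ᵗ∫₀^{t′} ġ_α(t−s) ġ_β(t′−s′) e^{−|s−s′|/τ₀} ds′ ds`,
there exists `C > 0` such that for all `T ≥ 1`,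
`T⁻² Σ_{α,β} ∫₀ᵀ∫₀ᵀ 2 R_{αβ}(t,t′)² dt dt′ ≤ C/T`. -/
theorem variance_performance_metric_decay
    (n : ℕ) (hn : 2 ≤ n) (γ τ₀ : ℝ) (hγ : 0 < γ) (hτ₀ : 0 < τ₀)
    (lam : ℕ → ℝ) (hlam : ∀ α ∈ Finset.Icc 2 n, γ / 4 < lam α)
    (Ω : ℕ → ℝ) (hΩ : ∀ α ∈ Finset.Icc 2 n, Ω α = Real.sqrt (4 * lam α * γ - γ ^ 2))
    (g : ℕ → ℝ → ℝ)
    (hg : ∀ α ∈ Finset.Icc 2 n, ∀ t : ℝ,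
      g α t = (2 * γ / Ω α) * Real.exp (-γ * t / 2) * Real.sin (Ω α * t / 2))
    (σ : ℕ → ℕ → ℝ)
    (R : ℕ → ℕ → ℝ → ℝ → ℝ)
    (hR : ∀ α ∈ Finset.Icc 2 n, ∀ β ∈ Finset.Icc 2 n, ∀ t t' : ℝ,
      R α β t t' = σ α β * ∫ s in (0 : ℝ)..t, ∫ s' in (0 : ℝ)..t',
        deriv (g α) (t - s) * deriv (g β) (t' - s') * Real.exp (-|s - s'| / τ₀)) :
    ∃ C : ℝ, 0 < C ∧ ∀ T : ℝ, 1 ≤ T →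
      T⁻¹ ^ 2 * ∑ α ∈ Finset.Icc 2 n, ∑ β ∈ Finset.Icc 2 n,
        (∫ t in (0 : ℝ)..T, ∫ t' in (0 : ℝ)..T, 2 * (R α β t t') ^ 2)
      ≤ C / T := by
  classical
  set S := Finset.Icc 2 n with hSdef
  set c : ℝ := min (γ / 2) (1 / τ₀) with hcdef
  have hc : 0 < c := lt_min (by linarith) (by positivity)
  set d : ℝ := c / 2 with hddef
  have hd : 0 < d := by positivity
  set M : ℕ → ℝ := fun α => |2 * γ / Ω α| * (|γ| / 2 + |Ω α| / 2) with hMdef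
  have hM0 : ∀ α, 0 ≤ M α := fun α => by rw [hMdef]; positivity
  have hGfacts : ∀ α ∈ S, Continuous (deriv (g α)) ∧
      ∀ u : ℝ, |deriv (g α) u| ≤ M α * Real.exp (-γ * u / 2) := by
    intro α hα
    have hfun : g α = fun t : ℝ =>
        (2 * γ / Ω α) * Real.exp (-γ * t / 2) * Real.sin (Ω α * t / 2) :=
      funext (hg α hα)
    rw [hfun, hMdef]
    exact green_package γ (Ω α) (2 * γ / Ω α)
  set K : ℕ → ℕ → ℝ := fun α β => |σ α β| * (M α * M β * d⁻¹ ^ 2) with hKdef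
  have hK0 : ∀ α β, 0 ≤ K α β := fun α β => by
    rw [hKdef]
    have := hM0 α; have := hM0 β
    positivity
  -- pointwise bound on R
  have hRbound : ∀ α ∈ S, ∀ β ∈ S, ∀ t t' : ℝ, 0 ≤ t → 0 ≤ t' →
      |R α β t t'| ≤ K α β * Real.exp (-(d * |t - t'|)) := by
    intro α hα β hβ t t' ht ht'
    rw [hR α hα β hβ t t', abs_mul]
    have hb := kernel_double_bound γ τ₀ hγ hτ₀ (deriv (g α)) (deriv (g β)) (M α) (M β)
      (hM0 α) (hM0 β) (hGfacts α hα).2 (hGfacts β hβ).2 t t' ht ht'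
    rw [← hcdef, ← hddef] at hb
    calc |σ α β| * |∫ s in (0:ℝ)..t, ∫ s' in (0:ℝ)..t',
          deriv (g α) (t - s) * deriv (g β) (t' - s') * Real.exp (-|s - s'| / τ₀)|
        ≤ |σ α β| * (M α * M β * d⁻¹ ^ 2 * Real.exp (-(d * |t - t'|))) :=
          mul_le_mul_of_nonneg_left hb (abs_nonneg _)
      _ = K α β * Real.exp (-(d * |t - t'|)) := by rw [hKdef]; ring
  -- joint continuity of R
  have hRcont : ∀ α ∈ S, ∀ β ∈ S, Continuous (fun p : ℝ × ℝ => R α β p.1 p.2) := by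
    intro α hα β hβ
    have hGα := (hGfacts α hα).1
    have hGβ := (hGfacts β hβ).1
    have hfun : (fun p : ℝ × ℝ => R α β p.1 p.2)
        = fun p : ℝ × ℝ => σ α β * ∫ s in (0:ℝ)..p.1, ∫ s' in (0:ℝ)..p.2,
            deriv (g α) (p.1 - s) * deriv (g β) (p.2 - s') * Real.exp (-|s - s'| / τ₀) :=
      funext fun p => hR α hα β hβ p.1 p.2
    rw [hfun]
    apply Continuous.mul continuous_const
    have hΦ : Continuous (fun q : (ℝ × ℝ) × ℝ => ∫ s' in (0:ℝ)..q.1.2,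
        deriv (g α) (q.1.1 - q.2) * deriv (g β) (q.1.2 - s')
          * Real.exp (-|q.2 - s'| / τ₀)) := by
      apply intervalIntegral.continuous_parametric_intervalIntegral_of_continuous
        (μ := MeasureTheory.volume)
        (f := fun (q : (ℝ × ℝ) × ℝ) (s' : ℝ) =>
          deriv (g α) (q.1.1 - q.2) * deriv (g β) (q.1.2 - s')
            * Real.exp (-|q.2 - s'| / τ₀))
        ?_ (continuous_snd.comp continuous_fst)
      apply Continuous.mul (Continuous.mul ?_ ?_) ?_
      · exact hGα.comp (by fun_prop)
      · exact hGβ.comp (by fun_prop)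
      · exact Real.continuous_exp.comp (by fun_prop)
    exact intervalIntegral.continuous_parametric_intervalIntegral_of_continuous
      (μ := MeasureTheory.volume)
      (f := fun (p : ℝ × ℝ) (s : ℝ) => ∫ s' in (0:ℝ)..p.2,
        deriv (g α) (p.1 - s) * deriv (g β) (p.2 - s') * Real.exp (-|s - s'| / τ₀))
      hΦ continuous_fst
  -- per-pair integral bound
  have hpair : ∀ α ∈ S, ∀ β ∈ S, ∀ T : ℝ, 1 ≤ T →
      (∫ t in (0:ℝ)..T, ∫ t' in (0:ℝ)..T, 2 * (R α β t t') ^ 2)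
        ≤ 4 * K α β ^ 2 / c * T := by
    intro α hα β hβ T hT
    have hT0 : (0:ℝ) ≤ T := by linarith
    have hcont := hRcont α hα β hβ
    have hIB : ∀ t ∈ Set.Icc (0:ℝ) T,
        (∫ t' in (0:ℝ)..T, 2 * (R α β t t') ^ 2) ≤ 4 * K α β ^ 2 / c := by
      intro t htm
      have hcontt : Continuous (fun t' => R α β t t') :=
        hcont.comp (Continuous.prodMk_right t)
      have hmono : (∫ t' in (0:ℝ)..T, 2 * (R α β t t') ^ 2)
          ≤ ∫ t' in (0:ℝ)..T, 2 * K α β ^ 2 * Real.exp (-(c * |t - t'|)) := by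
        apply intervalIntegral.integral_mono_on hT0
        · exact (Continuous.intervalIntegrable (by fun_prop) _ _)
        · exact (Continuous.intervalIntegrable (by fun_prop) _ _)
        · intro x hx
          have hb := hRbound α hα β hβ t x htm.1 hx.1
          have hsq : R α β t x ^ 2 ≤ (K α β * Real.exp (-(d * |t - x|))) ^ 2 := by
            rw [← sq_abs (R α β t x)]
            exact pow_le_pow_left₀ (abs_nonneg _) hb 2
          have hexp : (K α β * Real.exp (-(d * |t - x|))) ^ 2
              = K α β ^ 2 * Real.exp (-(c * |t - x|)) := by
            rw [mul_pow, sq (Real.exp _), ← Real.exp_add,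
              show -(d * |t - x|) + -(d * |t - x|) = -(c * |t - x|) by
                rw [hddef]; ring]
          calc 2 * (R α β t x) ^ 2 ≤ 2 * (K α β * Real.exp (-(d * |t - x|))) ^ 2 := by
                linarith
            _ = 2 * K α β ^ 2 * Real.exp (-(c * |t - x|)) := by rw [hexp]; ring
      have hi1 : IntervalIntegrable (fun t' => Real.exp (-(c * |t - t'|)))
          MeasureTheory.volume 0 t := Continuous.intervalIntegrable (by fun_prop) _ _
      have hi2 : IntervalIntegrable (fun t' => Real.exp (-(c * |t - t'|)))
          MeasureTheory.volume t T := Continuous.intervalIntegrable (by fun_prop) _ _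
      have hsplit : (∫ t' in (0:ℝ)..T, 2 * K α β ^ 2 * Real.exp (-(c * |t - t'|)))
          = 2 * K α β ^ 2 * ((∫ t' in (0:ℝ)..t, Real.exp (-(c * |t - t'|)))
            + ∫ t' in t..T, Real.exp (-(c * |t - t'|))) := by
        rw [intervalIntegral.integral_const_mul]
        rw [intervalIntegral.integral_add_adjacent_intervals hi1 hi2]
      have hp1 : (∫ t' in (0:ℝ)..t, Real.exp (-(c * |t - t'|))) ≤ c⁻¹ := by
        have heq : (∫ t' in (0:ℝ)..t, Real.exp (-(c * |t - t'|)))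
            = ∫ t' in (0:ℝ)..t, Real.exp (-(c * (t - t'))) := by
          apply intervalIntegral.integral_congr
          intro x hx
          rw [Set.uIcc_of_le htm.1] at hx
          show Real.exp (-(c * |t - x|)) = Real.exp (-(c * (t - x)))
          rw [abs_of_nonneg (by linarith [hx.2] : (0:ℝ) ≤ t - x)]
        rw [heq]; exact exp_decay_left hc htm.1
      have hp2 : (∫ t' in t..T, Real.exp (-(c * |t - t'|))) ≤ c⁻¹ := by
        have heq : (∫ t' in t..T, Real.exp (-(c * |t - t'|)))
            = ∫ t' in t..T, Real.exp (-(c * (t' - t))) := by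
          apply intervalIntegral.integral_congr
          intro x hx
          rw [Set.uIcc_of_le htm.2] at hx
          show Real.exp (-(c * |t - x|)) = Real.exp (-(c * (x - t)))
          rw [abs_sub_comm, abs_of_nonneg (by linarith [hx.1] : (0:ℝ) ≤ x - t)]
        rw [heq]; exact exp_decay_right hc htm.2
      calc (∫ t' in (0:ℝ)..T, 2 * (R α β t t') ^ 2)
          ≤ ∫ t' in (0:ℝ)..T, 2 * K α β ^ 2 * Real.exp (-(c * |t - t'|)) := hmono
        _ = 2 * K α β ^ 2 * ((∫ t' in (0:ℝ)..t, Real.exp (-(c * |t - t'|)))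
            + ∫ t' in t..T, Real.exp (-(c * |t - t'|))) := hsplit
        _ ≤ 2 * K α β ^ 2 * (c⁻¹ + c⁻¹) := by
            apply mul_le_mul_of_nonneg_left (add_le_add hp1 hp2)
            have := hK0 α β; positivity
        _ = 4 * K α β ^ 2 / c := by ring
    have houter : (∫ t in (0:ℝ)..T, ∫ t' in (0:ℝ)..T, 2 * (R α β t t') ^ 2)
        ≤ ∫ _t in (0:ℝ)..T, (4 * K α β ^ 2 / c) := by
      apply intervalIntegral.integral_mono_on hT0 _ (intervalIntegrable_const) hIB
      apply Continuous.intervalIntegrable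
      exact intervalIntegral.continuous_parametric_intervalIntegral_of_continuous'
        (μ := MeasureTheory.volume)
        (f := fun (t : ℝ) (t' : ℝ) => 2 * (R α β t t') ^ 2)
        (by fun_prop) 0 T
    calc (∫ t in (0:ℝ)..T, ∫ t' in (0:ℝ)..T, 2 * (R α β t t') ^ 2)
        ≤ ∫ _t in (0:ℝ)..T, (4 * K α β ^ 2 / c) := houter
      _ = (T - 0) • (4 * K α β ^ 2 / c) := intervalIntegral.integral_const _
      _ = 4 * K α β ^ 2 / c * T := by rw [smul_eq_mul]; ring
  -- assemble
  set Q : ℝ := ∑ α ∈ S, ∑ β ∈ S, 4 * K α β ^ 2 / c with hQdef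
  have hQ0 : 0 ≤ Q := by
    rw [hQdef]
    apply Finset.sum_nonneg; intro α _
    apply Finset.sum_nonneg; intro β _
    have := hK0 α β; positivity
  refine ⟨1 + Q, by linarith, ?_⟩
  intro T hT
  have hT0 : (0:ℝ) < T := by linarith
  have hsum : (∑ α ∈ S, ∑ β ∈ S, ∫ t in (0:ℝ)..T, ∫ t' in (0:ℝ)..T, 2 * (R α β t t') ^ 2)
      ≤ ∑ α ∈ S, ∑ β ∈ S, 4 * K α β ^ 2 / c * T := by
    apply Finset.sum_le_sum; intro α hα
    apply Finset.sum_le_sum; intro β hβ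
    exact hpair α hα β hβ T hT
  have hsum2 : (∑ α ∈ S, ∑ β ∈ S, 4 * K α β ^ 2 / c * T) = Q * T := by
    rw [hQdef, Finset.sum_mul]
    apply Finset.sum_congr rfl; intro α _
    rw [Finset.sum_mul]
  calc T⁻¹ ^ 2 * ∑ α ∈ S, ∑ β ∈ S,
        (∫ t in (0:ℝ)..T, ∫ t' in (0:ℝ)..T, 2 * (R α β t t') ^ 2)
      ≤ T⁻¹ ^ 2 * (Q * T) := by
        rw [← hsum2]
        exact mul_le_mul_of_nonneg_left hsum (by positivity)
    _ = Q / T := by field_simp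
    _ ≤ (1 + Q) / T := (div_le_div_iff_of_pos_right hT0).mpr (by linarith)
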